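/- arXiv:1811.02767 — 4 statements merged into one kernel-verified Lean document; each statement's English description precedes it below -/
import Mathlib

section
/- Let V be a real inner product space, ξ ∈ V a unit vector, η(X) = ⟪X, ξ⟫, and let W be a finite-dimensional subspace of V with ξ ∈ W; let P_W denote orthogonal projection onto W. Let φ : V → V be linear with ⟪φ a, b⟫ = −⟪a, φ b⟫ for all a, b ∈ V and ⟪φ X, φ Y⟫ = ⟪X, Y⟫ − η(X)η(Y) for all X, Y ∈ W. For X ∈ W set T X = P_W(φ X) and F X = φ X − T X. If there is θ ∈ ℝ such that T(T X) = cos²θ · (−X + η(X)·ξ) for all X ∈ W, then ⟪F X, F Y⟫ = sin²θ · (⟪X, Y⟫ − η(X)η(Y)) for all X, Y ∈ W. -/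
open scoped RealInnerProductSpace

/-- For a pointwise slant subspace `W` with slant angle `θ`, characterized by
`T² = cos²θ (−Id + η ⊗ ξ)`, one has `⟪FX, FY⟫ = sin²θ (⟪X,Y⟫ − η(X)η(Y))`,
where `F X = φ X − P_W (φ X)`. -/
theorem slant_F_inner {V : Type*} [NormedAddCommGroup V] [InnerProductSpace ℝ V]
    (ξ : V) (hξ : ‖ξ‖ = 1) (W : Submodule ℝ V) [FiniteDimensional ℝ W] (hξW : ξ ∈ W)
    (φ : V →ₗ[ℝ] V)
    (hskew : ∀ a b : V, ⟪φ a, b⟫ = -⟪a, φ b⟫)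
    (hmet : ∀ X Y : V, X ∈ W → Y ∈ W → ⟪φ X, φ Y⟫ = ⟪X, Y⟫ - ⟪X, ξ⟫ * ⟪Y, ξ⟫)
    (θ : ℝ)
    (hT : ∀ X : V, X ∈ W →
      ((Submodule.orthogonalProjectionOnto W (φ ((Submodule.orthogonalProjectionOnto W (φ X) : V))) : V)
        = Real.cos θ ^ 2 • (-X + ⟪X, ξ⟫ • ξ))) :
    ∀ X Y : V, X ∈ W → Y ∈ W →
      ⟪φ X - (Submodule.orthogonalProjectionOnto W (φ X) : V), φ Y - (Submodule.orthogonalProjectionOnto W (φ Y) : V)⟫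
        = Real.sin θ ^ 2 * (⟪X, Y⟫ - ⟪X, ξ⟫ * ⟪Y, ξ⟫) := by
  intro X Y hX hY
  set TX : V := (Submodule.orthogonalProjectionOnto W (φ X) : V) with hTXdef
  set TY : V := (Submodule.orthogonalProjectionOnto W (φ Y) : V) with hTYdef
  have hTXW : TX ∈ W := (Submodule.orthogonalProjectionOnto W (φ X)).2
  have hTYW : TY ∈ W := (Submodule.orthogonalProjectionOnto W (φ Y)).2
  have hFX : ∀ w ∈ W, ⟪φ X - TX, w⟫ = 0 := Submodule.starProjection_inner_eq_zero (K := W) (φ X)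
  have hFY : ∀ w ∈ W, ⟪φ Y - TY, w⟫ = 0 := Submodule.starProjection_inner_eq_zero (K := W) (φ Y)
  -- ⟪TX,TY⟫ = cos²θ (⟪X,Y⟫ - ηX ηY)
  have hTT : ⟪TX, TY⟫ = Real.cos θ ^ 2 * (⟪X, Y⟫ - ⟪X, ξ⟫ * ⟪Y, ξ⟫) := by
    have h1 : ⟪φ X, TY⟫ = ⟪TX, TY⟫ := by
      have h := hFX TY hTYW
      rw [inner_sub_left] at h
      linarith
    have h3 : ⟪X, φ TY⟫ = ⟪X, (Submodule.orthogonalProjectionOnto W (φ TY) : V)⟫ := by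
      have h : ⟪φ TY - (Submodule.orthogonalProjectionOnto W (φ TY) : V), X⟫ = 0 :=
        Submodule.starProjection_inner_eq_zero (K := W) (φ TY) X hX
      rw [inner_sub_left] at h
      linarith [real_inner_comm (φ TY) X, real_inner_comm ((Submodule.orthogonalProjectionOnto W (φ TY) : V)) X]
    have h4 : (Submodule.orthogonalProjectionOnto W (φ TY) : V) = Real.cos θ ^ 2 • (-Y + ⟪Y, ξ⟫ • ξ) :=
      hT Y hY
    rw [h4] at h3
    rw [inner_smul_right, inner_add_right, inner_neg_right, inner_smul_right] at h3
    have := hskew X TY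
    rw [real_inner_comm ξ X] at h3 ⊢
    nlinarith [h1, h3, this, real_inner_comm X ξ]
  -- main computation
  have hA : ⟪φ X - TX, φ Y - TY⟫ = ⟪φ X - TX, φ Y⟫ := by
    rw [inner_sub_right, hFX TY hTYW]; ring
  have hB : ⟪φ X - TX, φ Y⟫ = ⟪φ X, φ Y⟫ - ⟪TX, φ Y⟫ := by rw [inner_sub_left]
  have hC : ⟪TX, φ Y⟫ = ⟪TX, TY⟫ := by
    have h := hFY TX hTXW
    rw [inner_sub_left] at h
    linarith [real_inner_comm TX (φ Y), real_inner_comm TX TY]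
  rw [hA, hB, hC, hTT, hmet X Y hX hY]
  have hs : Real.sin θ ^ 2 = 1 - Real.cos θ ^ 2 := by
    have := Real.sin_sq_add_cos_sq θ; linarith
  rw [hs]; ring
end

section
/- Let V be a real inner product space, ξ ∈ V a unit vector, η(X) = ⟪X, ξ⟫, and let W be a finite-dimensional subspace of V with ξ ∈ W; let P_W denote orthogonal projection onto W. Let φ : V → V be linear with φ(φ X) = −X + η(X)·ξ for all X ∈ V. For X ∈ W set T X = P_W(φ X) and F X = φ X − T X. If there is θ ∈ ℝ such that T(T X) = cos²θ · (−X + η(X)·ξ) for all X ∈ W, then for every X ∈ W the tangential component of φ(F X) satisfies P_W(φ(F X)) = sin²θ · (−X + η(X)·ξ). -/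
open scoped RealInnerProductSpace

/-- For a pointwise slant subspace `W` with slant angle `θ`, the tangential component of
`φ (F X)` satisfies `t(FX) = sin²θ (−X + η(X) ξ)`, where `T X = P_W (φ X)` and
`F X = φ X − T X`. -/
theorem slant_tF {V : Type*} [NormedAddCommGroup V] [InnerProductSpace ℝ V]
    (ξ : V) (hξ : ‖ξ‖ = 1) (W : Submodule ℝ V) [FiniteDimensional ℝ W] (hξW : ξ ∈ W)
    (φ : V →ₗ[ℝ] V)
    (hφ2 : ∀ X : V, φ (φ X) = -X + ⟪X, ξ⟫ • ξ)
    (θ : ℝ)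
    (hT : ∀ X : V, X ∈ W →
      ((Submodule.orthogonalProjection W (φ ((Submodule.orthogonalProjection W (φ X) : V))) : V)
        = Real.cos θ ^ 2 • (-X + ⟪X, ξ⟫ • ξ))) :
    ∀ X : V, X ∈ W →
      (Submodule.orthogonalProjection W (φ (φ X - (Submodule.orthogonalProjection W (φ X) : V))) : V)
        = Real.sin θ ^ 2 • (-X + ⟪X, ξ⟫ • ξ) := by
  intro X hX
  have hmem : -X + ⟪X, ξ⟫ • ξ ∈ W := W.add_mem (W.neg_mem hX) (W.smul_mem _ hξW)
  have h1 : (Submodule.orthogonalProjection W (φ (φ X)) : V) = -X + ⟪X, ξ⟫ • ξ := by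
    rw [hφ2 X, ← Submodule.starProjection_apply, Submodule.starProjection_eq_self_iff.mpr hmem]
  have := hT X hX
  rw [map_sub, map_sub, Submodule.coe_sub, h1, this]
  have : (1 : ℝ) - Real.cos θ ^ 2 = Real.sin θ ^ 2 := by
    have := Real.sin_sq_add_cos_sq θ; linarith
  rw [← this]; module
end

section
/- Let V be a real inner product space, ξ ∈ V a unit vector, η(X) = ⟪X, ξ⟫, and let W be a finite-dimensional subspace of V with ξ ∈ W; let P_W denote orthogonal projection onto W. Let φ : V → V be linear with φ(φ X) = −X + η(X)·ξ for all X ∈ V. For X ∈ W set T X = P_W(φ X) and F X = φ X − T X. Then for every X ∈ W the normal component of φ(F X) satisfies φ(F X) − P_W(φ(F X)) = −F(T X). -/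
open scoped RealInnerProductSpace

/-- For a subspace `W` of an almost contact structure, the normal component of `φ (F X)`
satisfies `f(FX) = −F(TX)`, where `T X = P_W (φ X)` and `F X = φ X − T X`. -/
theorem slant_fF_eq_neg_FT {V : Type*} [NormedAddCommGroup V] [InnerProductSpace ℝ V]
    (ξ : V) (hξ : ‖ξ‖ = 1) (W : Submodule ℝ V) [FiniteDimensional ℝ W] (hξW : ξ ∈ W)
    (φ : V →ₗ[ℝ] V)
    (hφ2 : ∀ X : V, φ (φ X) = -X + ⟪X, ξ⟫ • ξ) :
    ∀ X : V, X ∈ W →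
      φ (φ X - (W.orthogonalProjection (φ X) : V))
          - (W.orthogonalProjection (φ (φ X - (W.orthogonalProjection (φ X) : V))) : V)
        = -(φ ((W.orthogonalProjection (φ X) : V))
            - (W.orthogonalProjection (φ ((W.orthogonalProjection (φ X) : V))) : V)) := by
  intro X hX
  have hw : (-X + ⟪X, ξ⟫ • ξ) ∈ W := W.add_mem (W.neg_mem hX) (W.smul_mem _ hξW)
  have h1 : φ (φ X - (W.orthogonalProjection (φ X) : V))
      = (-X + ⟪X, ξ⟫ • ξ) - φ ((W.orthogonalProjection (φ X) : V)) := by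
    rw [map_sub, hφ2]
  rw [h1, map_sub, Submodule.coe_sub, ← W.starProjection_apply (-X + ⟪X, ξ⟫ • ξ), W.starProjection_eq_self_iff.mpr hw]
  abel
end

section
/- Let V be a real inner product space, ξ ∈ V a unit vector, η(X) = ⟪X, ξ⟫, and let W be a finite-dimensional subspace of V with ξ ∈ W; let P_W denote orthogonal projection onto W. Let φ : V → V be linear with ⟪φ a, b⟫ = −⟪a, φ b⟫ for all a, b ∈ V and ⟪φ X, φ Y⟫ = ⟪X, Y⟫ − η(X)η(Y) for all X, Y ∈ W, and suppose there is θ ∈ ℝ with P_W(φ(P_W(φ X))) = cos²θ · (−X + η(X)·ξ) for all X ∈ W. Then for every X ∈ W with ⟪X, ξ⟫ = 0 one has ‖P_W(φ X)‖ = |cos θ| · ‖φ X‖; in particular, for every nonzero such X the angle between φ X and the subspace W is the same. -/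
open scoped RealInnerProductSpace

/-- If `T² = cos²θ (−Id + η ⊗ ξ)` on a subspace `W` containing the unit vector `ξ`, then for
every `X ∈ W` orthogonal to `ξ` one has `‖P_W (φ X)‖ = |cos θ| ‖φ X‖`; in particular the
(Wirtinger) angle between `φ X` and `W` is the same for all nonzero such `X`. -/
theorem slant_angle_constant {V : Type*} [NormedAddCommGroup V] [InnerProductSpace ℝ V]
    (ξ : V) (hξ : ‖ξ‖ = 1) (W : Submodule ℝ V) [FiniteDimensional ℝ W] (hξW : ξ ∈ W)
    (φ : V →ₗ[ℝ] V)
    (hskew : ∀ a b : V, ⟪φ a, b⟫ = -⟪a, φ b⟫)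
    (hmet : ∀ X Y : V, X ∈ W → Y ∈ W → ⟪φ X, φ Y⟫ = ⟪X, Y⟫ - ⟪X, ξ⟫ * ⟪Y, ξ⟫)
    (θ : ℝ)
    (hT : ∀ X : V, X ∈ W →
      ((Submodule.orthogonalProjectionOnto W (φ ((Submodule.orthogonalProjectionOnto W (φ X) : V))) : V)
        = Real.cos θ ^ 2 • (-X + ⟪X, ξ⟫ • ξ))) :
    ∀ X : V, X ∈ W → ⟪X, ξ⟫ = 0 →
      ‖(Submodule.orthogonalProjectionOnto W (φ X) : V)‖ = |Real.cos θ| * ‖φ X‖ := by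
  intro X hXW hXξ
  set p : V := (Submodule.orthogonalProjectionOnto W (φ X) : V) with hp
  have hpW : p ∈ W := (Submodule.orthogonalProjectionOnto W (φ X)).2
  -- ‖p‖² = ⟪φ X, p⟫
  have h1 : ⟪p, p⟫ = ⟪φ X, p⟫ := by
    have := Submodule.inner_starProjection_left_eq_right W (φ X) p
    rw [Submodule.starProjection_eq_self_iff.2 hpW, Submodule.starProjection_apply] at this
    rw [← this]
  -- ⟪φ X, p⟫ = -⟪X, φ p⟫
  have h2 : ⟪φ X, p⟫ = -⟪X, φ p⟫ := hskew X p
  -- ⟪X, φ p⟫ = ⟪X, P (φ p)⟫ = cos²θ * (-‖X‖²)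
  have h3 : ⟪X, φ p⟫ = Real.cos θ ^ 2 * (-⟪X, X⟫) := by
    have := Submodule.inner_starProjection_left_eq_right W X (φ p)
    rw [Submodule.starProjection_eq_self_iff.2 hXW] at this
    rw [this, Submodule.starProjection_apply, hT X hXW, hXξ, zero_smul, add_zero, real_inner_smul_right,
      inner_neg_right]
  have hnorm2 : ‖p‖ ^ 2 = Real.cos θ ^ 2 * ⟪X, X⟫ := by
    rw [← real_inner_self_eq_norm_sq, h1, h2, h3]; ring
  have hφnorm : ‖φ X‖ ^ 2 = ⟪X, X⟫ := by
    rw [← real_inner_self_eq_norm_sq, hmet X X hXW hXW, hXξ]; ring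
  have : ‖p‖ ^ 2 = (|Real.cos θ| * ‖φ X‖) ^ 2 := by
    rw [hnorm2, mul_pow, sq_abs, hφnorm]
  have h4 : ‖p‖ = |Real.cos θ| * ‖φ X‖ := by
    have hnn : 0 ≤ |Real.cos θ| * ‖φ X‖ := mul_nonneg (abs_nonneg _) (norm_nonneg _)
    nlinarith [norm_nonneg p]
  exact h4
end
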